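/- Let u, v be hermitian functionals not in Δ and let L, M be Laurent polynomials with (z^p L_*, z^p M_*) = (L, M) for some p ∈ ℤ and u·L = v·M, with associated C such that F·L = G·M + C. Then the rational modification u·L = v·M is minimal if and only if gcd(L, M, C) = 1 in the Laurent polynomial ring. -/

import Mathlib

open LaurentPolynomial Complex Polynomial

noncomputable section

abbrev LP := LaurentPolynomial ℂ
abbrev Func := LP →ₗ[ℂ] ℂ

/-- The coefficients of a Laurent polynomial, as a finitely supported function on `ℤ`. -/
def coeF (L : LP) : ℤ →₀ ℂ := L.coeff

/-- The modified functional `u·L`, defined by `(u·L)[f] = u[L·f]`. -/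
def smulF (u : Func) (L : LP) : Func := u ∘ₗ LinearMap.mulLeft ℂ L

/-- The moments `μ_n = u[zⁿ]`. -/
def moment (u : Func) (n : ℤ) : ℂ := u (T n)

/-- A functional is hermitian if `μ_{-n} = conj μ_n`. -/
def IsHermitian (u : Func) : Prop := ∀ n : ℤ, moment u (-n) = (starRingEnd ℂ) (moment u n)

/-- The Carathéodory formal series `F(z) = μ₀ + 2 Σ_{n≥1} μ_{-n} zⁿ`, as coefficients. -/
def CS (u : Func) : ℤ → ℂ := fun n => if n = 0 then moment u 0 else if 0 < n then 2 * moment u (-n) else 0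

/-- The Laurent formal series `L[u](z) = Σ_{n∈ℤ} μ_{-n} zⁿ`, as coefficients. -/
def LS (u : Func) : ℤ → ℂ := fun n => moment u (-n)

/-- `H_*(z) = conj (H (1/conj z))`, coefficient-wise. -/
def starS (H : ℤ → ℂ) : ℤ → ℂ := fun n => (starRingEnd ℂ) (H (-n))

/-- Product of a formal doubly-infinite series with a Laurent polynomial. -/
def mulS (H : ℤ → ℂ) (L : LP) : ℤ → ℂ := fun n => (coeF L).sum fun k c => c * H (n - k)

/-- The `*` operation on Laurent polynomials: `L_*(z) = conj (L (1/conj z))`. -/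
def starLP (L : LP) : LP :=
  AddMonoidAlgebra.ofCoeff (Finsupp.equivMapDomain (Equiv.neg ℤ)
    (Finsupp.mapRange (starRingEnd ℂ) (map_zero _) (coeF L)) : ℤ →₀ ℂ)

/-- A Laurent polynomial as a formal series. -/
def polyS (N : LP) : ℤ → ℂ := fun n => coeF N n

/-- The Lebesgue functional `leb[zⁿ] = δ_{n,0}`. -/
def lebF : Func := (Finsupp.lapply (0 : ℤ) : (ℤ →₀ ℂ) →ₗ[ℂ] ℂ) ∘ₗ
  (AddMonoidAlgebra.coeffLinearEquiv ℂ : LP ≃ₗ[ℂ] (ℤ →₀ ℂ)).toLinearMap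

/-- The Dirac delta at `z = 1`: evaluation at `1`. -/
def delta1 : Func := (Finsupp.lsum ℂ (fun _ : ℤ => (LinearMap.id : ℂ →ₗ[ℂ] ℂ)) : (ℤ →₀ ℂ) →ₗ[ℂ] ℂ) ∘ₗ
  (AddMonoidAlgebra.coeffLinearEquiv ℂ : LP ≃ₗ[ℂ] (ℤ →₀ ℂ)).toLinearMap

/-- `P* (z) = z^q conj(P(1/conj z))` with `q` given: conjugate coefficients and reflect at `q`. -/
def starDeg (q : ℕ) (P : Polynomial ℂ) : Polynomial ℂ := Polynomial.reflect q (P.map (starRingEnd ℂ))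

/-- The class `Δ` of hermitian functionals annihilated by a nonzero Laurent polynomial. -/
def InDelta (u : Func) : Prop := IsHermitian u ∧ ∃ N : LP, N ≠ 0 ∧ smulF u N = 0

/-! ### Auxiliary lemmas -/

/-- `act L H = mulS H L`, a more convenient argument order. -/
def act (L : LP) (H : ℤ → ℂ) : ℤ → ℂ := fun n => (coeF L).sum fun k c => c * H (n - k)

def toLP (f : ℤ →₀ ℂ) : LP := AddMonoidAlgebra.ofCoeff f

lemma act_eq_sum (L : LP) (H : ℤ → ℂ) (n : ℤ) (s : Finset ℤ) (hs : (coeF L).support ⊆ s) :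
    act L H n = ∑ k ∈ s, coeF L k * H (n - k) := by
  rw [act, Finsupp.sum]
  exact Finset.sum_subset hs (by intro x _ hx; rw [Finsupp.notMem_support_iff.mp hx, zero_mul])

lemma act_apply (L : LP) (H : ℤ → ℂ) (n : ℤ) :
    act L H n = ∑ k ∈ (coeF L).support, coeF L k * H (n - k) := rfl

lemma act_zero (H : ℤ → ℂ) : act 0 H = 0 := by ext n; simp [act, coeF]

lemma act_add_left (A B : LP) (H : ℤ → ℂ) (n : ℤ) :
    act (A + B) H n = act A H n + act B H n := by
  classical
  rw [act_eq_sum A H n ((coeF (A+B)).support ∪ (coeF A).support ∪ (coeF B).support) (by intro x; simp +contextual [Finset.mem_union]),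
      act_eq_sum B H n ((coeF (A+B)).support ∪ (coeF A).support ∪ (coeF B).support) (by intro x; simp +contextual [Finset.mem_union]),
      act_eq_sum (A+B) H n ((coeF (A+B)).support ∪ (coeF A).support ∪ (coeF B).support) (by intro x; simp +contextual [Finset.mem_union]),
      ← Finset.sum_add_distrib]
  exact Finset.sum_congr rfl fun k _ => by
    show (coeF A k + coeF B k) * _ = _
    rw [add_mul]

lemma act_neg_left (B : LP) (H : ℤ → ℂ) (n : ℤ) : act (-B) H n = -act B H n := by
  have h := act_add_left B (-B) H n
  rw [add_neg_cancel, act_zero] at h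
  simp only [Pi.zero_apply] at h
  linear_combination -h

lemma act_sub_left (A B : LP) (H : ℤ → ℂ) (n : ℤ) :
    act (A - B) H n = act A H n - act B H n := by
  rw [sub_eq_add_neg, act_add_left, act_neg_left, sub_eq_add_neg]

lemma act_single (k : ℤ) (c : ℂ) (H : ℤ → ℂ) (n : ℤ) :
    act (AddMonoidAlgebra.single k c) H n = c * H (n - k) := by
  show (Finsupp.single k c).sum (fun j d => d * H (n - j)) = c * H (n - k)
  rw [Finsupp.sum_single_index]; rw [zero_mul]

lemma coeF_single_mul (k : ℤ) (c : ℂ) (A : LP) (m : ℤ) :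
    coeF (AddMonoidAlgebra.single k c * A) m = c * coeF A (m - k) := by
  show (AddMonoidAlgebra.single k c * A).coeff m = c * A.coeff (m - k)
  rw [AddMonoidAlgebra.coeff_single_mul_apply]
  congr 2
  ring

lemma act_single_mul (k : ℤ) (c : ℂ) (A : LP) (H : ℤ → ℂ) (n : ℤ) :
    act (AddMonoidAlgebra.single k c * A) H n = c * act A H (n - k) := by
  classical
  have hsub : (coeF (AddMonoidAlgebra.single k c * A)).support ⊆
      (coeF A).support.map (addLeftEmbedding k) := by
    intro m hm
    rw [Finsupp.mem_support_iff] at hm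
    rw [coeF_single_mul] at hm
    have h2 : coeF A (m - k) ≠ 0 := fun h => hm (by rw [h, mul_zero])
    exact Finset.mem_map.mpr ⟨m - k, Finsupp.mem_support_iff.mpr h2, by
      simp [addLeftEmbedding]⟩
  rw [act_eq_sum _ H n _ hsub, Finset.sum_map, act_apply, Finset.mul_sum]
  apply Finset.sum_congr rfl
  intro j _
  rw [coeF_single_mul]
  have e1 : addLeftEmbedding k j = k + j := rfl
  rw [e1]
  ring_nf

lemma act_mul (A B : LP) (H : ℤ → ℂ) (n : ℤ) :
    act (A * B) H n = act A (act B H) n := by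
  have key : ∀ (f : ℤ →₀ ℂ) (m : ℤ), act (toLP f * B) H m = act (toLP f) (act B H) m := by
    intro f
    induction f using Finsupp.induction_linear with
    | zero => intro m; rw [show toLP 0 = 0 from rfl, zero_mul]; simp [act, coeF]
    | add f g hf hg =>
        intro m
        rw [show toLP (f + g) = toLP f + toLP g from rfl, add_mul,
          act_add_left, act_add_left, hf, hg]
    | single a b =>
        intro m
        rw [show toLP (Finsupp.single a b) = AddMonoidAlgebra.single a b from rfl,
          act_single_mul, act_single]
  exact key A.coeff n

lemma act_congr (L : LP) {H1 H2 : ℤ → ℂ} (h : ∀ m, H1 m = H2 m) (n : ℤ) :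
    act L H1 n = act L H2 n := by
  rw [act_apply, act_apply]; exact Finset.sum_congr rfl fun k _ => by rw [h]

lemma act_H_add (L : LP) (H1 H2 : ℤ → ℂ) (n : ℤ) :
    act L (fun m => H1 m + H2 m) n = act L H1 n + act L H2 n := by
  rw [act_apply, act_apply, act_apply, ← Finset.sum_add_distrib]
  exact Finset.sum_congr rfl fun k _ => by ring

lemma act_H_sub (L : LP) (H1 H2 : ℤ → ℂ) (n : ℤ) :
    act L (fun m => H1 m - H2 m) n = act L H1 n - act L H2 n := by
  rw [act_apply, act_apply, act_apply, ← Finset.sum_sub_distrib]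
  exact Finset.sum_congr rfl fun k _ => by ring

lemma act_H_smul (a : ℂ) (L : LP) (H : ℤ → ℂ) (n : ℤ) :
    act L (fun m => a * H m) n = a * act L H n := by
  rw [act_apply, act_apply, Finset.mul_sum]
  exact Finset.sum_congr rfl fun k _ => by ring

def deltaS : ℤ → ℂ := fun n => if n = 0 then 1 else 0

lemma act_deltaS (X : LP) (m : ℤ) : act X deltaS m = coeF X m := by
  classical
  rw [act_apply]
  rw [Finset.sum_eq_single m]
  · simp [deltaS]
  · intro k _ hk
    have : m - k ≠ 0 := fun h => hk (by omega)
    simp [deltaS, this]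
  · intro hm
    rw [Finsupp.notMem_support_iff.mp hm, zero_mul]

lemma coeF_mul (A B : LP) (m : ℤ) : coeF (A * B) m = act A (fun j => coeF B j) m := by
  rw [← act_deltaS, act_mul]
  exact act_congr A (fun j => act_deltaS B j) m

lemma coeF_starLP (L : LP) (n : ℤ) : coeF (starLP L) n = (starRingEnd ℂ) (coeF L (-n)) := by
  show (Finsupp.equivMapDomain (Equiv.neg ℤ) (Finsupp.mapRange (starRingEnd ℂ) (map_zero _) (coeF L))) n = _
  rw [Finsupp.equivMapDomain_apply, Finsupp.mapRange_apply]
  rfl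

lemma lp_ext {A B : LP} (h : ∀ n, coeF A n = coeF B n) : A = B := LaurentPolynomial.ext h

lemma starLP_starLP (L : LP) : starLP (starLP L) = L := by
  apply lp_ext; intro n
  rw [coeF_starLP, coeF_starLP]
  simp

lemma starLP_ne_zero {L : LP} (h : L ≠ 0) : starLP L ≠ 0 := by
  intro h0
  apply h
  rw [← starLP_starLP L, h0]
  apply lp_ext; intro n
  rw [coeF_starLP]
  show (starRingEnd ℂ) ((0 : ℤ →₀ ℂ) (-n)) = (0 : ℤ →₀ ℂ) n
  simp

lemma act_starS (L : LP) (H : ℤ → ℂ) (n : ℤ) :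
    act L (starS H) n = (starRingEnd ℂ) (act (starLP L) H (-n)) := by
  classical
  have hsub : (coeF (starLP L)).support ⊆ (coeF L).support.map ⟨Neg.neg, neg_injective⟩ := by
    intro m hm
    rw [Finsupp.mem_support_iff, coeF_starLP] at hm
    have : coeF L (-m) ≠ 0 := fun h => hm (by rw [h, map_zero])
    exact Finset.mem_map.mpr ⟨-m, Finsupp.mem_support_iff.mpr this, by simp⟩
  rw [act_eq_sum _ H (-n) _ hsub, Finset.sum_map, map_sum, act_apply]
  apply Finset.sum_congr rfl
  intro k _
  show coeF L k * starS H (n - k) = (starRingEnd ℂ) (coeF (starLP L) (-k) * H (-n - -k))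
  rw [coeF_starLP, map_mul]
  simp only [neg_neg, Complex.conj_conj]
  have : (-(n - k) : ℤ) = -n - -k := by ring
  show (coeF L) k * (starRingEnd ℂ) (H (-(n - k))) = _
  rw [this]

lemma starLP_mul (A B : LP) : starLP (A * B) = starLP A * starLP B := by
  apply lp_ext; intro m
  rw [coeF_mul, coeF_starLP, coeF_mul]
  have h1 : act (starLP A) (fun j => coeF (starLP B) j) m
      = act (starLP A) (starS (fun j => coeF B j)) m :=
    act_congr _ (fun j => by rw [coeF_starLP]; rfl) m
  rw [h1, act_starS, starLP_starLP]

lemma act_T_mul (a : ℤ) (A : LP) (H : ℤ → ℂ) (n : ℤ) :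
    act (T a * A) H n = act A H (n - a) := by
  have : (T a : LP) = AddMonoidAlgebra.single a 1 := rfl
  rw [this, act_single_mul, one_mul]

lemma starLP_of_sym {L : LP} {p : ℤ} (h : T p * starLP L = L) : starLP L = T (-p) * L := by
  have h2 := congrArg (fun X => T (-p) * X) h
  simp only [← mul_assoc, ← T_add] at h2
  rw [← h2]
  norm_num [T_zero]

lemma u_single (u : Func) (m : ℤ) (c : ℂ) : u (AddMonoidAlgebra.single m c) = c * u (T m) := by
  have h1 : (AddMonoidAlgebra.single m c : LP) = c • T m := by
    show AddMonoidAlgebra.ofCoeff (Finsupp.single m c) = c • AddMonoidAlgebra.ofCoeff (Finsupp.single m (1:ℂ))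
    rw [← AddMonoidAlgebra.ofCoeff_smul, Finsupp.smul_single', mul_one]
  rw [h1, map_smul, smul_eq_mul]

lemma act_LS (u : Func) (A : LP) (n : ℤ) : act A (LS u) n = smulF u A (T (-n)) := by
  have key : ∀ f : ℤ →₀ ℂ, act (toLP f) (LS u) n = u (toLP f * T (-n)) := by
    intro f
    induction f using Finsupp.induction_linear with
    | zero =>
        rw [show toLP 0 = 0 from rfl, act_zero, zero_mul, map_zero]; rfl
    | add f g hf hg =>
        rw [show toLP (f + g) = toLP f + toLP g from rfl, act_add_left, add_mul, map_add, hf, hg]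
    | single k c =>
        rw [show toLP (Finsupp.single k c) = AddMonoidAlgebra.single k c from rfl, act_single]
        have h2 : (AddMonoidAlgebra.single k c : LP) * T (-n) = AddMonoidAlgebra.single (k + -n) c := by
          show AddMonoidAlgebra.single k c * AddMonoidAlgebra.single (-n) (1:ℂ) = _
          rw [AddMonoidAlgebra.single_mul_single, mul_one]
        rw [h2, u_single]
        show c * u (T (-(n - k))) = c * u (T (k + -n))
        congr 3
        omega
  exact key A.coeff

lemma smulF_eq_iff (u v : Func) (A B : LP) :
    smulF u A = smulF v B ↔ ∀ n, act A (LS u) n = act B (LS v) n := by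
  constructor
  · intro h n; rw [act_LS, act_LS, h]
  · intro h
    apply LinearMap.ext
    intro f
    induction f using AddMonoidAlgebra.induction_linear with
    | zero => rw [map_zero, map_zero]
    | add f g hf hg => rw [map_add, map_add, hf, hg]
    | single m c =>
    have h1 := h (-m)
    rw [act_LS, act_LS, neg_neg] at h1
    show smulF u A (AddMonoidAlgebra.single m c) = smulF v B (AddMonoidAlgebra.single m c)
    have h2 : (AddMonoidAlgebra.single m c : LP) = c • T m := by
      show AddMonoidAlgebra.ofCoeff (Finsupp.single m c) = c • AddMonoidAlgebra.ofCoeff (Finsupp.single m (1:ℂ))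
      rw [← AddMonoidAlgebra.ofCoeff_smul, Finsupp.smul_single', mul_one]
    rw [h2, map_smul, map_smul, h1]

lemma smulF_zero_right (v : Func) : smulF v 0 = 0 := by
  apply LinearMap.ext
  intro f
  show v (0 * f) = 0
  rw [zero_mul, map_zero]

lemma smulF_mul (u : Func) (A B : LP) : smulF u (A * B) = smulF (smulF u A) B := by
  apply LinearMap.ext
  intro f
  show u (A * B * f) = u (A * (B * f))
  rw [mul_assoc]

lemma smulF_add_right (u : Func) (A B : LP) : smulF u (A + B) = smulF u A + smulF u B := by
  apply LinearMap.ext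
  intro f
  show u ((A + B) * f) = u (A * f) + u (B * f)
  rw [add_mul, map_add]

lemma supp_ne {P : LP} (hP : P ≠ 0) : (coeF P).support.Nonempty := by
  rw [Finsupp.support_nonempty_iff]
  exact fun h => hP (AddMonoidAlgebra.coeff_injective (by exact h))

lemma recur (P : LP) (hP : P ≠ 0) (R : ℤ → ℂ) (N : ℤ) (hbdd : ∀ n < N, R n = 0)
    (hrec : ∀ n, act P R n = 0) : ∀ n, R n = 0 := by
  classical
  set s := (coeF P).support with hs
  have hne : s.Nonempty := supp_ne hP
  set k0 := s.min' hne with hk0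
  have main : ∀ d : ℕ, ∀ m : ℤ, m < N + d → R m = 0 := by
    intro d
    induction d with
    | zero => intro m hm; exact hbdd m (by omega)
    | succ d ih =>
        intro m hm
        by_cases hm' : m < N + d
        · exact ih m hm'
        have hme : m = N + d := by omega
        have heq := hrec (m + k0)
        rw [act_apply] at heq
        rw [← Finset.add_sum_erase _ _ (s.min'_mem hne)] at heq
        have hz : ∑ k ∈ s.erase k0, coeF P k * R (m + k0 - k) = 0 := by
          apply Finset.sum_eq_zero
          intro k hk
          have hks : k ∈ s := Finset.mem_of_mem_erase hk
          have hkne : k ≠ k0 := Finset.ne_of_mem_erase hk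
          have hge : k0 ≤ k := s.min'_le k hks
          have : m + k0 - k < N + d := by omega
          rw [ih _ this, mul_zero]
        rw [hz, add_zero] at heq
        have h0 : coeF P k0 ≠ 0 := Finsupp.mem_support_iff.mp (s.min'_mem hne)
        have he : m + k0 - k0 = m := by omega
        rw [he] at heq
        exact (mul_eq_zero.mp heq).resolve_left h0
  intro n
  exact main ((n - N).toNat + 1) n (by omega)

lemma act_bdd_below (L : LP) (H : ℤ → ℂ) (N : ℤ) (hH : ∀ m, m < N → H m = 0) :
    ∃ N', ∀ n, n < N' → act L H n = 0 := by
  classical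
  obtain ⟨B, hB⟩ : ∃ B, ∀ k ∈ (coeF L).support, B ≤ k := by
    by_cases h : (coeF L).support.Nonempty
    · exact ⟨(coeF L).support.min' h, fun k hk => Finset.min'_le _ k hk⟩
    · exact ⟨0, fun k hk => absurd ⟨k, hk⟩ h⟩
  refine ⟨N + B, fun n hn => ?_⟩
  rw [act_apply]
  apply Finset.sum_eq_zero
  intro k hk
  rw [hH (n - k) (by have := hB k hk; omega), mul_zero]

lemma coeF_bdd_below (X : LP) : ∃ N, ∀ n, n < N → coeF X n = 0 := by
  classical
  by_cases h : (coeF X).support.Nonempty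
  · refine ⟨(coeF X).support.min' h, fun n hn => ?_⟩
    by_contra hne
    exact absurd (Finset.min'_le _ n (Finsupp.mem_support_iff.mpr hne)) (by omega)
  · exact ⟨0, fun n _ => by
      by_contra hne
      exact h ⟨n, Finsupp.mem_support_iff.mpr hne⟩⟩

lemma CS_neg_zero (u : Func) : ∀ m, m < 0 → CS u m = 0 := by
  intro m hm
  rw [CS]
  simp only [show m ≠ 0 by omega, if_false, show ¬(0 < m) by omega, if_false]

lemma two_LS {u : Func} (hu : IsHermitian u) (n : ℤ) :
    2 * LS u n = CS u n + starS (CS u) n := by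
  have hss : starS (CS u) n = (starRingEnd ℂ) (CS u (-n)) := rfl
  have hls : LS u n = moment u (-n) := rfl
  rw [hss, hls]
  rcases lt_trichotomy n 0 with h | h | h
  · have h1 : CS u n = 0 := by
      simp only [CS]
      rw [if_neg (by omega : ¬ n = 0), if_neg (by omega : ¬ (0:ℤ) < n)]
    have h2 : CS u (-n) = 2 * moment u n := by
      simp only [CS]
      rw [if_neg (by omega : ¬ -n = 0), if_pos (by omega : (0:ℤ) < -n), neg_neg]
    rw [h1, h2, map_mul, ← hu n]
    have h3 : (starRingEnd ℂ) (2:ℂ) = 2 := Complex.conj_ofNat 2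
    rw [h3]
    ring
  · subst h
    have h1 : CS u (0:ℤ) = moment u 0 := by simp only [CS]; norm_num
    rw [neg_zero, h1]
    have h0 := hu 0
    rw [neg_zero] at h0
    rw [← h0]
    ring
  · have h1 : CS u n = 2 * moment u (-n) := by
      simp only [CS]
      rw [if_neg (by omega : ¬ n = 0), if_pos h]
    have h2 : CS u (-n) = 0 := by
      simp only [CS]
      rw [if_neg (by omega : ¬ -n = 0), if_neg (by omega : ¬ (0:ℤ) < -n)]
    rw [h1, h2, map_zero]
    ring

lemma dvd_of_dvd_mul_T {g A : LP} (n : ℕ) (h : g ∣ A * T n) : g ∣ A := by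
  have hh : A = A * T n * T (-n) := by
    rw [mul_assoc, ← T_add]
    norm_num [T_zero]
  rw [hh]
  exact Dvd.dvd.mul_right h _

lemma bezout (A B : LP) (hA : A ≠ 0) :
    ∃ g x y : LP, g ≠ 0 ∧ g ∣ A ∧ g ∣ B ∧ x * A + y * B = g := by
  obtain ⟨na, α, hα⟩ := A.exists_T_pow
  obtain ⟨nb, β, hβ⟩ := B.exists_T_pow
  have hαne : α ≠ 0 := by
    intro h
    apply hA
    have h1 : A * T na = 0 := by rw [← hα, h, map_zero]
    have hT : IsUnit (T na : LP) := isUnit_T na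
    exact (mul_eq_zero.mp h1).resolve_right hT.ne_zero
  set g0 := EuclideanDomain.gcd α β with hg0
  have hg0ne : g0 ≠ 0 := fun h => hαne (EuclideanDomain.gcd_eq_zero_iff.mp h).1
  refine ⟨Polynomial.toLaurent g0, T na * Polynomial.toLaurent (EuclideanDomain.gcdA α β),
    T nb * Polynomial.toLaurent (EuclideanDomain.gcdB α β), ?_, ?_, ?_, ?_⟩
  · simpa using hg0ne
  · apply dvd_of_dvd_mul_T na
    rw [← hα]
    exact map_dvd Polynomial.toLaurent (EuclideanDomain.gcd_dvd_left α β)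
  · apply dvd_of_dvd_mul_T nb
    rw [← hβ]
    exact map_dvd Polynomial.toLaurent (EuclideanDomain.gcd_dvd_right α β)
  · have hid := EuclideanDomain.gcd_eq_gcd_ab α β
    have h3 := congrArg Polynomial.toLaurent hid
    rw [map_add, map_mul, map_mul, hα, hβ] at h3
    rw [h3]
    ring

lemma key_identity {u v : Func} (hu : IsHermitian u) (hv : IsHermitian v) (A B : LP) (n : ℤ) :
    2 * (act A (LS u) n - act B (LS v) n)
      = (act A (CS u) n - act B (CS v) n)
        + (starRingEnd ℂ) (act (starLP A) (CS u) (-n) - act (starLP B) (CS v) (-n)) := by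
  have hA : 2 * act A (LS u) n
      = act A (CS u) n + (starRingEnd ℂ) (act (starLP A) (CS u) (-n)) := by
    rw [← act_H_smul 2 A (LS u) n, act_congr A (fun m => two_LS hu m) n, act_H_add, act_starS]
  have hB : 2 * act B (LS v) n
      = act B (CS v) n + (starRingEnd ℂ) (act (starLP B) (CS v) (-n)) := by
    rw [← act_H_smul 2 B (LS v) n, act_congr B (fun m => two_LS hv m) n, act_H_add, act_starS]
  rw [map_sub]
  rw [mul_sub, hA, hB]
  ring

/-- with `u, v` hermitian, `∉ Δ`, a symmetric pair `(L,M)` with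
`u·L = v·M` and associated LST `F·L = G·M + C`, the rational modification `u·L = v·M`
is minimal iff `gcd(L, M, C) = 1` in the Laurent polynomial ring. -/
theorem stmt11 (u v : Func) (hu : IsHermitian u) (hv : IsHermitian v)
    (hud : ¬ InDelta u) (hvd : ¬ InDelta v)
    (L M C : LP) (p : ℤ) (hL : L ≠ 0) (hM : M ≠ 0)
    (hLs : T p * starLP L = L) (hMs : T p * starLP M = M)
    (hRM : smulF u L = smulF v M)
    (hC : mulS (CS u) L = (fun n => mulS (CS v) M n + coeF C n)) :
    (∀ L₁ M₁ : LP, L₁ ≠ 0 → M₁ ≠ 0 → smulF u L₁ = smulF v M₁ →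
      ∃ N : LP, L₁ = N * L ∧ M₁ = N * M) ↔
    (∀ D : LP, D ∣ L → D ∣ M → D ∣ C → IsUnit D) := by
  classical
  have hC' : ∀ n, act L (CS u) n = act M (CS v) n + coeF C n := fun n => congrFun hC n
  have hW : ∀ n, act L (LS u) n = act M (LS v) n := (smulF_eq_iff u v L M).mp hRM
  have hLst : starLP L = T (-p) * L := starLP_of_sym hLs
  have hMst : starLP M = T (-p) * M := starLP_of_sym hMs
  -- the symmetry relation for C
  have hCsym : ∀ n, coeF C n + (starRingEnd ℂ) (coeF C (p - n)) = 0 := by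
    intro n
    have h0 := key_identity hu hv L M n
    rw [hW n, sub_self, mul_zero] at h0
    rw [hLst, hMst, act_T_mul, act_T_mul] at h0
    have e1 : (-n - -p : ℤ) = p - n := by ring
    rw [e1] at h0
    have h1 : act L (CS u) n - act M (CS v) n = coeF C n := by rw [hC']; ring
    have h2 : act L (CS u) (p - n) - act M (CS v) (p - n) = coeF C (p - n) := by rw [hC']; ring
    rw [h1, h2] at h0
    exact h0.symm
  constructor
  · -- minimality → every common divisor is a unit
    intro hmin D hDL hDM hDC
    have hD0 : D ≠ 0 := by
      rintro rfl
      exact hL (zero_dvd_iff.mp hDL)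
    obtain ⟨L₁, hL₁⟩ := hDL
    obtain ⟨M₁, hM₁⟩ := hDM
    obtain ⟨C₁, hC₁⟩ := hDC
    have hL₁0 : L₁ ≠ 0 := by rintro rfl; rw [mul_zero] at hL₁; exact hL hL₁
    have hM₁0 : M₁ ≠ 0 := by rintro rfl; rw [mul_zero] at hM₁; exact hM hM₁
    -- step 1 : act L₁ (CS u) - act M₁ (CS v) = coeF C₁
    set S : ℤ → ℂ := fun n => act L₁ (CS u) n - act M₁ (CS v) n - coeF C₁ n with hS
    have hSrec : ∀ n, act D S n = 0 := by
      intro n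
      have e1 : act D S n
          = act D (fun m => act L₁ (CS u) m - act M₁ (CS v) m) n - act D (fun m => coeF C₁ m) n := by
        rw [← act_H_sub]
      rw [e1, act_H_sub, ← act_mul, ← act_mul, ← coeF_mul, ← hL₁, ← hM₁, ← hC₁, hC']
      ring
    have hSbdd : ∃ N', ∀ n, n < N' → S n = 0 := by
      obtain ⟨N1, h1⟩ := act_bdd_below L₁ (CS u) 0 (CS_neg_zero u)
      obtain ⟨N2, h2⟩ := act_bdd_below M₁ (CS v) 0 (CS_neg_zero v)
      obtain ⟨N3, h3⟩ := coeF_bdd_below C₁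
      refine ⟨min (min N1 N2) N3, fun n hn => ?_⟩
      rw [hS]
      simp [h1 n (by omega), h2 n (by omega), h3 n (by omega)]
    obtain ⟨N', hN'⟩ := hSbdd
    have hS0 : ∀ n, S n = 0 := recur D hD0 S N' hN' hSrec
    have hstep1 : ∀ n, act L₁ (CS u) n - act M₁ (CS v) n = coeF C₁ n := by
      intro n
      have h := hS0 n
      rw [hS] at h
      simp only at h
      linear_combination h
    -- step 2 : act (starLP L₁) (CS u) - act (starLP M₁) (CS v) = - coeF (starLP C₁)
    set S2 : ℤ → ℂ := fun n => act (starLP L₁) (CS u) n - act (starLP M₁) (CS v) n + coeF (starLP C₁) n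
      with hS2
    have hS2rec : ∀ n, act (starLP D) S2 n = 0 := by
      intro n
      have e1 : act (starLP D) S2 n
          = act (starLP D) (fun m => act (starLP L₁) (CS u) m - act (starLP M₁) (CS v) m) n
            + act (starLP D) (fun m => coeF (starLP C₁) m) n := by
        rw [← act_H_add]
      rw [e1, act_H_sub, ← act_mul, ← act_mul, ← coeF_mul,
        ← starLP_mul, ← starLP_mul, ← starLP_mul, ← hL₁, ← hM₁, ← hC₁,
        hLst, hMst, act_T_mul, act_T_mul]
      have e2 : (n - -p : ℤ) = n + p := by ring
      rw [e2, hC']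
      have e3 : coeF (starLP C) n = (starRingEnd ℂ) (coeF C (-n)) := coeF_starLP C n
      have e4 : (starRingEnd ℂ) (coeF C (-n)) = - coeF C (n + p) := by
        have h5 := hCsym (-n)
        have h6 := congrArg (starRingEnd ℂ) h5
        rw [map_add, map_zero, Complex.conj_conj] at h6
        have e5 : (p - -n : ℤ) = n + p := by ring
        rw [e5] at h6
        linear_combination h6
      rw [e3, e4]
      ring
    have hS2bdd : ∃ N', ∀ n, n < N' → S2 n = 0 := by
      obtain ⟨N1, h1⟩ := act_bdd_below (starLP L₁) (CS u) 0 (CS_neg_zero u)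
      obtain ⟨N2, h2⟩ := act_bdd_below (starLP M₁) (CS v) 0 (CS_neg_zero v)
      obtain ⟨N3, h3⟩ := coeF_bdd_below (starLP C₁)
      refine ⟨min (min N1 N2) N3, fun n hn => ?_⟩
      rw [hS2]
      simp [h1 n (by omega), h2 n (by omega), h3 n (by omega)]
    obtain ⟨N2', hN2'⟩ := hS2bdd
    have hS20 : ∀ n, S2 n = 0 := recur (starLP D) (starLP_ne_zero hD0) S2 N2' hN2' hS2rec
    have hstep2 : ∀ n, act (starLP L₁) (CS u) n - act (starLP M₁) (CS v) n = - coeF (starLP C₁) n := by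
      intro n
      have h := hS20 n
      rw [hS2] at h
      simp only at h
      linear_combination h
    -- conclude : u·L₁ = v·M₁
    have hpair : smulF u L₁ = smulF v M₁ := by
      rw [smulF_eq_iff]
      intro n
      have h0 := key_identity hu hv L₁ M₁ n
      rw [hstep1 n, hstep2 (-n)] at h0
      rw [coeF_starLP, neg_neg, map_neg, Complex.conj_conj] at h0
      have h2 : (2 : ℂ) * (act L₁ (LS u) n - act M₁ (LS v) n) = 0 := by
        rw [h0]; ring
      have h9 : act L₁ (LS u) n - act M₁ (LS v) n = 0 :=
        (mul_eq_zero.mp h2).resolve_left two_ne_zero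
      linear_combination h9
    obtain ⟨N, hN1, _⟩ := hmin L₁ M₁ hL₁0 hM₁0 hpair
    have : (1 : LP) * L₁ = (N * D) * L₁ := by
      rw [one_mul]
      calc L₁ = N * L := hN1
      _ = N * D * L₁ := by rw [hL₁]; ring
    have hND : (1 : LP) = N * D := mul_right_cancel₀ hL₁0 this
    exact IsUnit.of_mul_eq_one N (by linear_combination -hND : D * N = 1)
  · -- gcd = 1 → minimality
    intro hgcd L₁ M₁ hL₁0 hM₁0 hpair
    have hW₁ : ∀ n, act L₁ (LS u) n = act M₁ (LS v) n := (smulF_eq_iff u v L₁ M₁).mp hpair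
    -- step a : L * M₁ = L₁ * M
    have hEzero : L * M₁ = L₁ * M := by
      have hE : ∀ n, act (L * M₁ - L₁ * M) (LS u) n = 0 := by
        intro n
        rw [act_sub_left]
        have e1 : act (L * M₁) (LS u) n = act (M₁ * M) (LS v) n := by
          rw [mul_comm, act_mul, act_congr M₁ hW, ← act_mul]
        have e2 : act (L₁ * M) (LS u) n = act (M * M₁) (LS v) n := by
          rw [mul_comm, act_mul, act_congr M hW₁, ← act_mul]
        rw [e1, e2, mul_comm M₁ M, sub_self]
      by_contra hne
      apply hud
      refine ⟨hu, L * M₁ - L₁ * M, sub_ne_zero.mpr hne, ?_⟩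
      rw [show (0 : Func) = smulF v 0 from (smulF_zero_right v).symm, smulF_eq_iff]
      intro n
      rw [hE n, act_zero]
      rfl
    -- step b : reduce the fraction L₁ / L
    obtain ⟨g, x, y, hg0, hgL, hgL₁, hbez⟩ := bezout L L₁ hL
    obtain ⟨b', hb'⟩ := hgL
    obtain ⟨a', ha'⟩ := hgL₁
    have hb'0 : b' ≠ 0 := by rintro rfl; rw [mul_zero] at hb'; exact hL hb'
    have hxy : x * b' + y * a' = 1 := by
      have h1 : g * (x * b' + y * a') = g * 1 := by
        rw [mul_one]
        calc g * (x * b' + y * a') = x * (g * b') + y * (g * a') := by ring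
        _ = x * L + y * L₁ := by rw [← hb', ← ha']
        _ = g := hbez
      exact mul_left_cancel₀ hg0 h1
    have hbM : b' * M₁ = a' * M := by
      have h1 : g * (b' * M₁) = g * (a' * M) := by
        have := hEzero
        rw [hb', ha'] at this
        calc g * (b' * M₁) = g * b' * M₁ := by ring
        _ = g * a' * M := this
        _ = g * (a' * M) := by ring
      exact mul_left_cancel₀ hg0 h1
    set M₂ : LP := x * M + y * M₁ with hM₂
    have hMb : M = b' * M₂ := by
      rw [hM₂]
      calc M = (x * b' + y * a') * M := by rw [hxy, one_mul]
      _ = x * (b' * M) + y * (a' * M) := by ring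
      _ = x * (b' * M) + y * (b' * M₁) := by rw [hbM]
      _ = b' * (x * M + y * M₁) := by ring
    have hM₁a : M₁ = a' * M₂ := by
      have h1 : b' * M₁ = b' * (a' * M₂) := by
        calc b' * M₁ = a' * M := hbM
        _ = a' * (b' * M₂) := by rw [← hMb]
        _ = b' * (a' * M₂) := by ring
      exact mul_left_cancel₀ hb'0 h1
    -- step c : u·g = v·M₂
    have hpair2 : smulF u g = smulF v M₂ := by
      have e0 : g = L * x + L₁ * y := by
        rw [← hbez]
        ring
      have e1 : smulF u g = smulF u (L * x + L₁ * y) := congrArg (smulF u) e0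
      have e2 : smulF v M₂ = smulF v (M * x + M₁ * y) := by
        congr 1
        rw [hM₂]
        ring
      rw [e1, e2, smulF_add_right, smulF_add_right, smulF_mul, smulF_mul, smulF_mul,
        smulF_mul, hRM, hpair]
    have hWg : ∀ n, act g (LS u) n = act M₂ (LS v) n := (smulF_eq_iff u v g M₂).mp hpair2
    -- step d : b' divides C
    set S : ℤ → ℂ := fun n => act g (CS u) n - act M₂ (CS v) n with hSd
    have hSC : ∀ n, act b' S n = coeF C n := by
      intro n
      rw [hSd]
      have e1 : act b' (fun m => act g (CS u) m - act M₂ (CS v) m) n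
          = act (b' * g) (CS u) n - act (b' * M₂) (CS v) n := by
        rw [act_H_sub, ← act_mul, ← act_mul]
      rw [e1, ← hMb, show b' * g = L by rw [hb']; ring, hC']
      ring
    have hrefl : ∀ n, S n = - (starRingEnd ℂ)
        ((act (starLP g) (CS u) (-n) - act (starLP M₂) (CS v) (-n))) := by
      intro n
      have h0 := key_identity hu hv g M₂ n
      rw [hWg n, sub_self, mul_zero] at h0
      rw [hSd]
      simp only
      linear_combination -h0
    obtain ⟨A1, hA1⟩ := act_bdd_below g (CS u) 0 (CS_neg_zero u)
    obtain ⟨A2, hA2⟩ := act_bdd_below M₂ (CS v) 0 (CS_neg_zero v)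
    obtain ⟨B1, hB1⟩ := act_bdd_below (starLP g) (CS u) 0 (CS_neg_zero u)
    obtain ⟨B2, hB2⟩ := act_bdd_below (starLP M₂) (CS v) 0 (CS_neg_zero v)
    have hSsupp : ∀ n, S n ≠ 0 → n ∈ Finset.Icc (min A1 A2) (- min B1 B2) := by
      intro n hn
      rw [Finset.mem_Icc]
      constructor
      · by_contra hlt
        apply hn
        rw [hSd]
        simp only
        rw [hA1 n (by omega), hA2 n (by omega)]
        ring
      · by_contra hgt
        apply hn
        rw [hrefl n, hB1 (-n) (by omega), hB2 (-n) (by omega)]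
        simp
    set c0 : ℤ →₀ ℂ := Finsupp.onFinset _ S hSsupp with hc0
    have hbC : b' ∣ C := by
      refine ⟨toLP c0, ?_⟩
      apply lp_ext
      intro n
      rw [coeF_mul]
      have e1 : act b' (fun j => coeF (toLP c0) j) n = act b' S n :=
        act_congr b' (fun j => rfl) n
      rw [e1, hSC]
    -- conclude
    have hbunit : IsUnit b' := hgcd b' ⟨g, by rw [hb']; ring⟩ ⟨M₂, hMb⟩ hbC
    obtain ⟨w', hw'⟩ := hbunit.exists_right_inv
    refine ⟨a' * w', ?_, ?_⟩
    · rw [ha']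
      have hgw : g = L * w' := by
        rw [hb']
        calc g = g * 1 := by ring
        _ = g * (b' * w') := by rw [hw']
        _ = g * b' * w' := by ring
      rw [hgw]
      ring
    · rw [hM₁a, hMb]
      calc a' * M₂ = a' * (1 * M₂) := by ring
      _ = a' * ((b' * w') * M₂) := by rw [hw']
      _ = a' * w' * (b' * M₂) := by ring
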